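/- Suppose Ω is a Cantor group that admits a minimal ℤ^d action by translations {T^n}_{n∈ℤ^d}. Then for every continuous f : Ω → ℝ and every ω ∈ Ω, the element V_ω of ℓ∞(ℤ^d) defined by V_ω(n) = f(T^n ω) is limit-periodic. -/

import Mathlib

open Filter Topology

/-- Translation action of `ℤ^d` on `ℓ^∞(ℤ^d)`: `(S_m V)(n) = V(n - m)`. -/
noncomputable def Sh {d : ℕ} (m : Fin d → ℤ) (V : lp (fun _ : Fin d → ℤ => ℝ) ⊤) :
    lp (fun _ : Fin d → ℤ => ℝ) ⊤ :=
  ⟨fun n => V (n - m), by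
    show Memℓp (fun n : Fin d → ℤ => V (n - m)) ⊤
    have h : Memℓp (fun n : Fin d → ℤ => V n) ⊤ := lp.memℓp V
    rw [memℓp_infty_iff] at h ⊢
    have hsurj : Function.Surjective (fun n : Fin d → ℤ => n - m) :=
      fun y => ⟨y + m, by simp⟩
    have heq : (Set.range fun n : Fin d → ℤ => ‖V (n - m)‖) =
        Set.range fun n : Fin d → ℤ => ‖V n‖ := by
      have h2 : (fun n : Fin d → ℤ => ‖V (n - m)‖) =
          (fun n => ‖V n‖) ∘ (fun n : Fin d → ℤ => n - m) := rfl
      rw [h2, Set.range_comp, hsurj.range_eq, Set.image_univ]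
    rwa [heq]⟩

/-- `V ∈ ℓ^∞(ℤ^d)` is periodic if its orbit under translations is finite. -/
def PeriodicSeq {d : ℕ} (V : lp (fun _ : Fin d → ℤ => ℝ) ⊤) : Prop :=
  (Set.range fun m : Fin d → ℤ => Sh m V).Finite

/-- `V ∈ ℓ^∞(ℤ^d)` is limit-periodic if it lies in the `ℓ^∞`-closure of the periodic
elements. -/
def LimitPeriodicSeq {d : ℕ} (V : lp (fun _ : Fin d → ℤ => ℝ) ⊤) : Prop :=
  V ∈ closure {W : lp (fun _ : Fin d → ℤ => ℝ) ⊤ | PeriodicSeq W}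

/-- The hull of `V ∈ ℓ^∞(ℤ^d)`: the closure of its translation orbit. -/
noncomputable def hullSet {d : ℕ} (V : lp (fun _ : Fin d → ℤ => ℝ) ⊤) :
    Set (lp (fun _ : Fin d → ℤ => ℝ) ⊤) :=
  closure (Set.range fun m : Fin d → ℤ => Sh m V)

/-- If `Ω` is a Cantor group admitting a minimal `ℤ^d` action by
translations `T^n ω = ω + ∑ j, n j • α j`, then for every continuous `f : Ω → ℝ` and every
`ω ∈ Ω`, the element `V_ω ∈ ℓ^∞(ℤ^d)` given by `V_ω(n) = f(T^n ω)` is limit-periodic. -/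
theorem limitPeriodic_of_sampling (d : ℕ) (Ω : Type) [TopologicalSpace Ω] [AddCommGroup Ω]
    [IsTopologicalAddGroup Ω] [CompactSpace Ω] [TotallyDisconnectedSpace Ω]
    [TopologicalSpace.MetrizableSpace Ω] [Infinite Ω]
    (α : Fin d → Ω)
    (hmin : ∀ ω : Ω, Dense (Set.range fun n : Fin d → ℤ => ω + ∑ j, n j • α j))
    (f : C(Ω, ℝ)) (ω : Ω) (V : lp (fun _ : Fin d → ℤ => ℝ) ⊤)
    (hV : ∀ n : Fin d → ℤ, V n = f (ω + ∑ j, n j • α j)) :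
    LimitPeriodicSeq V := by
  rw [LimitPeriodicSeq, Metric.mem_closure_iff]
  intro ε hε
  set s : (Fin d → ℤ) → Ω := fun n => ∑ j, n j • α j with hs_def
  have hs_sub : ∀ n m : Fin d → ℤ, s (n - m) = s n - s m := by
    intro n m
    simp only [hs_def, Pi.sub_apply, sub_smul, Finset.sum_sub_distrib]
  -- uniform structure
  letI : UniformSpace Ω := IsTopologicalAddGroup.rightUniformSpace Ω
  haveI : IsUniformAddGroup Ω := isUniformAddGroup_of_addCommGroup
  have huc : UniformContinuous f := CompactSpace.uniformContinuous_of_continuous f.continuous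
  have hεU : {p : ℝ × ℝ | dist p.1 p.2 < ε / 2} ∈ uniformity ℝ :=
    Metric.dist_mem_uniformity (half_pos hε)
  have hmem := huc hεU
  rw [uniformity_eq_comap_nhds_zero Ω] at hmem
  obtain ⟨U, hU0, hUsub⟩ := Filter.mem_comap.mp hmem
  -- clopen neighborhood of 0 inside interior U
  obtain ⟨C, hC, h0C, hCU⟩ :=
    compact_exists_isClopen_in_isOpen isOpen_interior (mem_interior_iff_mem_nhds.mpr hU0)
  -- open subgroup inside C
  obtain ⟨H, hH⟩ :=
    IsTopologicalAddGroup.exist_openAddSubgroup_sub_clopen_nhds_of_zero hC h0C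
  have hHU : (H : Set Ω) ⊆ U := fun x hx => interior_subset (hCU (hH hx))
  have key : ∀ x y : Ω, y - x ∈ H → dist (f x) (f y) < ε / 2 := by
    intro x y hxy
    have hp : ((x, y) : Ω × Ω) ∈ (fun p : Ω × Ω => p.2 - p.1) ⁻¹' U := hHU hxy
    exact hUsub hp
  -- finite quotient
  haveI : Finite (Ω ⧸ H.toAddSubgroup) :=
    AddSubgroup.quotient_finite_of_isOpen H.toAddSubgroup H.isOpen
  set Q := Ω ⧸ H.toAddSubgroup with hQ
  set mk : Ω → Q := QuotientAddGroup.mk with hmk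
  set g : Q → ℝ := fun q => f (ω + q.out) with hg
  have hgb : ∀ q : Q, ‖g q‖ ≤ ‖f‖ := fun q => f.norm_coe_le_norm _
  have hWmem : ∀ q : Q, Memℓp (fun n : Fin d → ℤ => g (mk (s n) - q)) ⊤ := by
    intro q
    apply memℓp_infty
    exact ⟨‖f‖, by rintro x ⟨n, rfl⟩; exact hgb _⟩
  set F : Q → lp (fun _ : Fin d → ℤ => ℝ) ⊤ := fun q => ⟨fun n => g (mk (s n) - q), hWmem q⟩
    with hF
  set W : lp (fun _ : Fin d → ℤ => ℝ) ⊤ := F 0 with hW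
  have hWapp : ∀ n : Fin d → ℤ, W n = g (mk (s n)) := by
    intro n
    show g (mk (s n) - 0) = g (mk (s n))
    rw [sub_zero]
  -- Sh m W = F (mk (s m))
  have hSh : ∀ m : Fin d → ℤ, Sh m W = F (mk (s m)) := by
    intro m
    apply Subtype.ext
    funext n
    show W (n - m) = g (mk (s n) - mk (s m))
    rw [hWapp, hs_sub]
    congr 1
  have hper : PeriodicSeq W := by
    apply Set.Finite.subset (Set.finite_range F)
    rintro x ⟨m, rfl⟩
    exact ⟨mk (s m), (hSh m).symm⟩
  refine ⟨W, hper, ?_⟩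
  -- distance estimate
  have hdist : ∀ n : Fin d → ℤ, ‖V n - W n‖ ≤ ε / 2 := by
    intro n
    rw [hWapp, hV]
    have hrep : mk (s n) = mk ((mk (s n)).out) := (QuotientAddGroup.out_eq' _).symm
    have hmemH : (ω + (mk (s n)).out) - (ω + s n) ∈ H := by
      have : (ω + (mk (s n)).out) - (ω + s n) = (mk (s n)).out - s n := by abel
      rw [this]
      exact (QuotientAddGroup.eq_iff_sub_mem.mp hrep.symm)
    have := key (ω + s n) (ω + (mk (s n)).out) hmemH
    rw [Real.dist_eq] at this
    exact le_of_lt this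
  have : dist V W ≤ ε / 2 := by
    rw [dist_eq_norm]
    exact lp.norm_le_of_forall_le (le_of_lt (half_pos hε)) fun n => by
      simpa using hdist n
  linarith
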